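/- Let A be a bounded operator on a Hilbert space H with inner product ⟨·,·⟩, and suppose A is sectorial in the sense that there exists 0 < γ < ∞ with |⟨f, Im(A) f⟩| ≤ −γ ⟨f, Re(A) f⟩ for all f ∈ H, where −Re(A) is a positive operator. If h ∈ H satisfies Re(A) h = 0, then A h = 0. -/

import Mathlib

open ContinuousLinearMap Complex

variable {H : Type*} [NormedAddCommGroup H] [InnerProductSpace ℂ H] [CompleteSpace H]

local notation "⟪" x ", " y "⟫" => @inner ℂ _ _ x y

/-- If a bounded operator A on a Hilbert space is sectorial, i.e.
`|⟨f, Im(A) f⟩| ≤ -γ ⟨f, Re(A) f⟩` for some `γ > 0`, where `-Re(A)` is positive, then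
`Re(A) h = 0` implies `A h = 0`. -/
theorem sectorial_realPart_kernel (A : H →L[ℂ] H) (γ : ℝ) (hγ : 0 < γ)
    (ReA ImA : H →L[ℂ] H)
    (hRe : ReA = (1 / 2 : ℂ) • (A + ContinuousLinearMap.adjoint A))
    (hIm : ImA = (1 / (2 * Complex.I)) • (A - ContinuousLinearMap.adjoint A))
    (hpos : ∀ f : H, (⟪f, ReA f⟫).re ≤ 0)
    (hsect : ∀ f : H, ‖⟪f, ImA f⟫‖ ≤ -γ * (⟪f, ReA f⟫).re)
    (h : H) (hh : ReA h = 0) : A h = 0 := by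
  have hc : (1 / (2 * Complex.I) : ℂ) = -(Complex.I) / 2 := by
    field_simp
    simp [Complex.ext_iff]
  -- self-adjointness
  have hReSA : ContinuousLinearMap.adjoint ReA = ReA := by
    rw [hRe]
    simp [map_smulₛₗ, map_add, adjoint_adjoint]
    match_scalars <;> simp [Complex.ext_iff, Complex.conj_ofNat] <;> norm_num
  have hImSA : ContinuousLinearMap.adjoint ImA = ImA := by
    rw [hIm, hc]
    simp [map_smulₛₗ, map_sub, adjoint_adjoint]
    match_scalars <;> simp [Complex.ext_iff, Complex.conj_ofNat] <;> norm_num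
  have hA : A = ReA + Complex.I • ImA := by
    rw [hRe, hIm, hc]
    match_scalars <;> simp [Complex.ext_iff, Complex.conj_ofNat] <;> ring
  -- ⟪h, ImA h⟫ = 0
  have hImh : ⟪h, ImA h⟫ = 0 := by
    have := hsect h
    rw [hh] at this
    simp only [inner_zero_right, Complex.zero_re, mul_zero] at this
    exact norm_eq_zero.mp (le_antisymm this (norm_nonneg _))
  -- key: ∀ v, Re ⟪v, ImA h⟫ = 0
  have key : ∀ v : H, (⟪v, ImA h⟫).re = 0 := by
    intro v
    set c : ℂ := ⟪v, ImA h⟫ with hc'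
    set e : ℂ := ⟪v, ImA v⟫ with he'
    set d : ℝ := (⟪v, ReA v⟫).re with hd'
    have hd0 : d ≤ 0 := hpos v
    have hRehv : ⟪h, ReA v⟫ = 0 := by
      rw [← adjoint_inner_left, hReSA, hh, inner_zero_left]
    have hImhv : ⟪h, ImA v⟫ = (starRingEnd ℂ) c := by
      rw [← adjoint_inner_left, hImSA, hc', ← inner_conj_symm]
    -- expansion of inner products at h + t • v
    have expand : ∀ t : ℝ,
        ⟪h + (t : ℂ) • v, ImA (h + (t : ℂ) • v)⟫ = (2 * t * c.re : ℂ) + (t : ℂ)^2 * e ∧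
        (⟪h + (t : ℂ) • v, ReA (h + (t : ℂ) • v)⟫).re = t^2 * d := by
      intro t
      constructor
      · have hcc : (starRingEnd ℂ) c + c = 2 * (c.re : ℂ) := by
          rw [add_comm, Complex.add_conj]; push_cast; ring
        simp only [map_add, map_smul, inner_add_left, inner_add_right, inner_smul_left,
          inner_smul_right, hImh, hImhv, ← hc', ← he', Complex.conj_ofReal]
        push_cast
        linear_combination (t : ℂ) * hcc
      · simp only [map_add, map_smul, inner_add_left, inner_add_right, inner_smul_left,
          inner_smul_right, hh, hRehv, inner_zero_right, Complex.conj_ofReal]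
        simp [← hd']
        ring
    -- for all t > 0, |c.re| ≤ t * C
    have bound : ∀ t : ℝ, 0 < t → 2 * t * |c.re| ≤ t^2 * (-γ * d + |e.re|) := by
      intro t ht
      obtain ⟨h1, h2⟩ := expand t
      have hs := hsect (h + (t : ℂ) • v)
      rw [h1, h2] at hs
      have hre : |2 * t * c.re + t^2 * e.re| ≤ -γ * (t^2 * d) := by
        have hre0 : (((2 * t * c.re : ℂ)) + (t:ℂ)^2 * e).re = 2 * t * c.re + t^2 * e.re := by
          simp [← Complex.ofReal_pow, Complex.add_re, Complex.mul_re, Complex.ofReal_re]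
        calc |2 * t * c.re + t^2 * e.re|
            = |(((2 * t * c.re : ℂ)) + (t:ℂ)^2 * e).re| := by rw [hre0]
          _ ≤ ‖(2 * t * c.re : ℂ) + (t:ℂ)^2 * e‖ := Complex.abs_re_le_norm _
          _ ≤ -γ * (t^2 * d) := hs
      have : 2 * t * |c.re| = |2 * t * c.re| := by
        rw [abs_mul, abs_of_pos (by positivity : (0:ℝ) < 2 * t)]
      rw [this]
      calc |2 * t * c.re| ≤ |2 * t * c.re + t^2 * e.re| + |t^2 * e.re| := by
            have h3 := abs_add_le (2 * t * c.re + t^2 * e.re) (-(t^2 * e.re))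
            simp only [add_neg_cancel_right, abs_neg] at h3
            exact h3
        _ ≤ -γ * (t^2 * d) + t^2 * |e.re| := by
            rw [abs_mul, _root_.abs_of_nonneg (sq_nonneg t)]; linarith
        _ = t^2 * (-γ * d + |e.re|) := by ring
    -- conclude c.re = 0
    by_contra hne
    have hpos' : 0 < |c.re| := abs_pos.mpr hne
    set C : ℝ := -γ * d + |e.re| with hC
    have hC0 : 0 ≤ C := by
      have : 0 ≤ -γ * d := by nlinarith
      have := abs_nonneg e.re
      linarith
    -- pick t small: t = |c.re| / (C + 1)
    set t : ℝ := |c.re| / (C + 1) with ht'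
    have ht : 0 < t := by positivity
    have := bound t ht
    have h2 : 2 * t * |c.re| ≤ t^2 * C := this
    have heq : t * (C + 1) = |c.re| := by
      rw [ht']; field_simp
    nlinarith [mul_pos ht hpos', sq_nonneg t, mul_pos ht ht]
  -- from key: ImA h = 0
  have hImAh : ImA h = 0 := by
    have hall : ∀ v : H, ⟪v, ImA h⟫ = 0 := by
      intro v
      have h1 := key v
      have h2 := key (Complex.I • v)
      rw [inner_smul_left] at h2
      simp [Complex.ext_iff] at h2 ⊢
      constructor
      · exact h1
      · simpa using h2
    have := hall (ImA h)
    rwa [inner_self_eq_zero] at this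
  rw [hA]
  simp [hh, hImAh]
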